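/- Let A be an N×N left-stochastic matrix with nonnegative entries (each column sums to 1), E an N×N matrix, M and R block-diagonal matrices (step-sizes and covariances), and define B = ((A⊗I_M) + (E⊗I_M))^T (I − M R). Then the spectral radius of B satisfies ρ(B) ≤ (1 + ‖(E⊗I_M)^T‖_{b,∞}) · ‖I − M R‖_{b,∞}, where ‖·‖_{b,∞} denotes the block maximum norm with blocks of size M. -/

import Mathlib

set_option linter.unusedSectionVars false


open Matrix Kronecker

/-- Block maximum norm of a block vector with blocks indexed by `o`, each block a
vector indexed by `m`: the maximum of the Euclidean norms of the blocks. -/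
noncomputable def bvecNorm {o m : Type*} [Fintype o] [Fintype m]
    (x : o × m → ℂ) : ℝ :=
  ⨆ k : o, Real.sqrt (∑ j : m, ‖x (k, j)‖ ^ 2)

/-- Block maximum norm of a matrix: the norm induced by the block maximum vector norm. -/
noncomputable def bmatNorm {o m : Type*} [Fintype o] [Fintype m]
    (Y : Matrix (o × m) (o × m) ℂ) : ℝ :=
  sSup {c : ℝ | ∃ x : o × m → ℂ, bvecNorm x ≤ 1 ∧ c = bvecNorm (Y.mulVec x)}


section helpers
variable {o m : Type*} [Fintype o] [Fintype m]

/-- k-th block of a block vector, as an element of Euclidean space. -/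
def blk (x : o × m → ℂ) (k : o) : EuclideanSpace ℂ m := WithLp.toLp 2 (fun j => x (k, j))

lemma bvecNorm_eq (x : o × m → ℂ) : bvecNorm x = ⨆ k, ‖blk x k‖ := by
  unfold bvecNorm
  congr 1; funext k
  rw [EuclideanSpace.norm_eq]; rfl

lemma bvecNorm_nonneg (x : o × m → ℂ) : 0 ≤ bvecNorm x := by
  rw [bvecNorm_eq]
  exact Real.iSup_nonneg fun k => norm_nonneg _

lemma blk_le_bvecNorm (x : o × m → ℂ) (k : o) : ‖blk x k‖ ≤ bvecNorm x := by
  rw [bvecNorm_eq]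
  exact le_ciSup (f := fun k => ‖blk x k‖) (Set.Finite.bddAbove (Set.finite_range _)) k

lemma bvecNorm_le {x : o × m → ℂ} {C : ℝ} (hC : 0 ≤ C)
    (h : ∀ k, ‖blk x k‖ ≤ C) : bvecNorm x ≤ C := by
  rw [bvecNorm_eq]
  rcases isEmpty_or_nonempty o with he | hn
  · rw [Real.iSup_of_isEmpty]; exact hC
  · exact ciSup_le h

lemma bvecNorm_smul (c : ℂ) (x : o × m → ℂ) :
    bvecNorm (c • x) = ‖c‖ * bvecNorm x := by
  rw [bvecNorm_eq, bvecNorm_eq, Real.mul_iSup_of_nonneg (norm_nonneg c)]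
  congr 1; funext k
  have : blk (c • x) k = c • blk x k := rfl
  rw [this, norm_smul]

lemma bvecNorm_add (x y : o × m → ℂ) :
    bvecNorm (x + y) ≤ bvecNorm x + bvecNorm y := by
  apply bvecNorm_le (add_nonneg (bvecNorm_nonneg x) (bvecNorm_nonneg y))
  intro k
  have : blk (x + y) k = blk x k + blk y k := rfl
  rw [this]
  exact le_trans (norm_add_le _ _)
    (add_le_add (blk_le_bvecNorm x k) (blk_le_bvecNorm y k))

lemma bvecNorm_zero : bvecNorm (0 : o × m → ℂ) = 0 := by
  have h1 : bvecNorm (0 : o × m → ℂ) ≤ 0 := by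
    apply bvecNorm_le le_rfl
    intro k
    have : blk (0 : o × m → ℂ) k = 0 := rfl
    simp [this]
  exact le_antisymm h1 (bvecNorm_nonneg _)

lemma eq_zero_of_bvecNorm {x : o × m → ℂ} (h : bvecNorm x = 0) : x = 0 := by
  funext p
  obtain ⟨k, j⟩ := p
  have hb : ‖blk x k‖ ≤ 0 := h ▸ blk_le_bvecNorm x k
  have hb0 : blk x k = 0 := norm_le_zero_iff.mp hb
  have := congrArg (fun v : EuclideanSpace ℂ m => v j) hb0
  exact this

lemma norm_entry_le_bvecNorm (x : o × m → ℂ) (k : o) (j : m) :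
    ‖x (k, j)‖ ≤ bvecNorm x := by
  refine le_trans ?_ (blk_le_bvecNorm x k)
  rw [EuclideanSpace.norm_eq]
  have h1 : ‖x (k, j)‖ = Real.sqrt (‖x (k, j)‖ ^ 2) := (Real.sqrt_sq (norm_nonneg _)).symm
  rw [h1]
  apply Real.sqrt_le_sqrt
  exact Finset.single_le_sum (f := fun j' => ‖blk x k j'‖ ^ 2)
    (fun i _ => sq_nonneg _) (Finset.mem_univ j)
end helpers

lemma sqrt_sum_sq_le_sum {ι : Type*} {s : Finset ι} {f : ι → ℝ} (h : ∀ i ∈ s, 0 ≤ f i) :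
    Real.sqrt (∑ i ∈ s, f i ^ 2) ≤ ∑ i ∈ s, f i := by
  have hS : 0 ≤ ∑ i ∈ s, f i := Finset.sum_nonneg h
  have hle : ∑ i ∈ s, f i ^ 2 ≤ (∑ i ∈ s, f i) ^ 2 := by
    rw [sq, Finset.sum_mul]
    apply Finset.sum_le_sum
    intro i hi
    rw [sq]
    exact mul_le_mul_of_nonneg_left (Finset.single_le_sum h hi) (h i hi)
  calc Real.sqrt (∑ i ∈ s, f i ^ 2) ≤ Real.sqrt ((∑ i ∈ s, f i) ^ 2) := Real.sqrt_le_sqrt hle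
    _ = _ := Real.sqrt_sq hS

section matrixhelpers
variable {o m : Type*} [Fintype o] [Fintype m]

lemma mulVec_bvecNorm_le_of_le_one (Y : Matrix (o × m) (o × m) ℂ) (x : o × m → ℂ)
    (hx : bvecNorm x ≤ 1) :
    bvecNorm (Y.mulVec x) ≤ ∑ q : o × m, ∑ p : o × m, ‖Y q p‖ := by
  set K := ∑ q : o × m, ∑ p : o × m, ‖Y q p‖ with hK
  have hK0 : 0 ≤ K := Finset.sum_nonneg fun _ _ => Finset.sum_nonneg fun _ _ => norm_nonneg _
  apply bvecNorm_le hK0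
  intro k
  rw [EuclideanSpace.norm_eq]
  have hentry : ∀ j : m, ‖blk (Y.mulVec x) k j‖ ≤ ∑ p : o × m, ‖Y (k, j) p‖ := by
    intro j
    have : blk (Y.mulVec x) k j = ∑ p : o × m, Y (k, j) p * x p := rfl
    rw [this]
    refine le_trans (norm_sum_le _ _) (Finset.sum_le_sum fun p _ => ?_)
    rw [norm_mul]
    calc ‖Y (k, j) p‖ * ‖x p‖ ≤ ‖Y (k, j) p‖ * 1 := by
          refine mul_le_mul_of_nonneg_left ?_ (norm_nonneg _)
          exact le_trans (norm_entry_le_bvecNorm x p.1 p.2) hx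
      _ = ‖Y (k, j) p‖ := mul_one _
  calc Real.sqrt (∑ j : m, ‖blk (Y.mulVec x) k j‖ ^ 2)
      ≤ ∑ j : m, ‖blk (Y.mulVec x) k j‖ :=
        sqrt_sum_sq_le_sum fun _ _ => norm_nonneg _
    _ ≤ ∑ j : m, ∑ p : o × m, ‖Y (k, j) p‖ := Finset.sum_le_sum fun j _ => hentry j
    _ = ∑ j : m, ∑ p : o × m, ‖Y (k, j) p‖ := rfl
    _ ≤ K := by
        rw [hK, Fintype.sum_prod_type]
        exact Finset.single_le_sum (f := fun k' => ∑ j : m, ∑ p : o × m, ‖Y (k', j) p‖)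
          (fun _ _ => Finset.sum_nonneg fun _ _ => Finset.sum_nonneg fun _ _ => norm_nonneg _)
          (Finset.mem_univ k)

lemma bmat_set_bddAbove (Y : Matrix (o × m) (o × m) ℂ) :
    BddAbove {c : ℝ | ∃ x : o × m → ℂ, bvecNorm x ≤ 1 ∧ c = bvecNorm (Y.mulVec x)} := by
  refine ⟨∑ q : o × m, ∑ p : o × m, ‖Y q p‖, ?_⟩
  rintro c ⟨x, hx, rfl⟩
  exact mulVec_bvecNorm_le_of_le_one Y x hx

lemma bmat_set_zero_mem (Y : Matrix (o × m) (o × m) ℂ) :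
    (0 : ℝ) ∈ {c : ℝ | ∃ x : o × m → ℂ, bvecNorm x ≤ 1 ∧ c = bvecNorm (Y.mulVec x)} := by
  refine ⟨0, ?_, ?_⟩
  · rw [bvecNorm_zero]; norm_num
  · rw [Matrix.mulVec_zero, bvecNorm_zero]

lemma bmatNorm_nonneg (Y : Matrix (o × m) (o × m) ℂ) : 0 ≤ bmatNorm Y :=
  le_csSup (bmat_set_bddAbove Y) (bmat_set_zero_mem Y)

lemma bmatNorm_le (Y : Matrix (o × m) (o × m) ℂ) {C : ℝ}
    (h : ∀ x : o × m → ℂ, bvecNorm x ≤ 1 → bvecNorm (Y.mulVec x) ≤ C) :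
    bmatNorm Y ≤ C := by
  apply csSup_le ⟨0, bmat_set_zero_mem Y⟩
  rintro c ⟨x, hx, rfl⟩
  exact h x hx

lemma bvecNorm_mulVec_le (Y : Matrix (o × m) (o × m) ℂ) (x : o × m → ℂ) :
    bvecNorm (Y.mulVec x) ≤ bmatNorm Y * bvecNorm x := by
  rcases eq_or_lt_of_le (bvecNorm_nonneg x) with h0 | hpos
  · have hx0 : x = 0 := eq_zero_of_bvecNorm h0.symm
    rw [hx0, Matrix.mulVec_zero, bvecNorm_zero, mul_zero]
  · set c : ℝ := bvecNorm x with hc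
    have hc0 : c ≠ 0 := ne_of_gt hpos
    set x' : o × m → ℂ := ((c : ℂ))⁻¹ • x with hx'
    have hnx' : bvecNorm x' = 1 := by
      rw [hx', bvecNorm_smul, norm_inv, Complex.norm_real, Real.norm_of_nonneg (le_of_lt hpos),
        ← hc, inv_mul_cancel₀ hc0]
    have hmem : bvecNorm (Y.mulVec x') ∈
        {d : ℝ | ∃ z : o × m → ℂ, bvecNorm z ≤ 1 ∧ d = bvecNorm (Y.mulVec z)} :=
      ⟨x', le_of_eq hnx', rfl⟩
    have hle : bvecNorm (Y.mulVec x') ≤ bmatNorm Y :=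
      le_csSup (bmat_set_bddAbove Y) hmem
    have heq : bvecNorm (Y.mulVec x') = c⁻¹ * bvecNorm (Y.mulVec x) := by
      rw [hx', Matrix.mulVec_smul, bvecNorm_smul, norm_inv, Complex.norm_real,
        Real.norm_of_nonneg (le_of_lt hpos)]
    rw [heq] at hle
    calc bvecNorm (Y.mulVec x) = c * (c⁻¹ * bvecNorm (Y.mulVec x)) := by
          rw [← mul_assoc, mul_inv_cancel₀ hc0, one_mul]
      _ ≤ c * bmatNorm Y := by
          exact mul_le_mul_of_nonneg_left hle (le_of_lt hpos)
      _ = bmatNorm Y * c := mul_comm _ _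

lemma bmatNorm_mul_le (X Y : Matrix (o × m) (o × m) ℂ) :
    bmatNorm (X * Y) ≤ bmatNorm X * bmatNorm Y := by
  apply bmatNorm_le
  intro x hx
  rw [← Matrix.mulVec_mulVec]
  calc bvecNorm (X.mulVec (Y.mulVec x)) ≤ bmatNorm X * bvecNorm (Y.mulVec x) :=
        bvecNorm_mulVec_le X _
    _ ≤ bmatNorm X * (bmatNorm Y * bvecNorm x) :=
        mul_le_mul_of_nonneg_left (bvecNorm_mulVec_le Y x) (bmatNorm_nonneg X)
    _ ≤ bmatNorm X * (bmatNorm Y * 1) := by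
        refine mul_le_mul_of_nonneg_left ?_ (bmatNorm_nonneg X)
        exact mul_le_mul_of_nonneg_left hx (bmatNorm_nonneg Y)
    _ = bmatNorm X * bmatNorm Y := by rw [mul_one]

lemma bmatNorm_add_le (X Y : Matrix (o × m) (o × m) ℂ) :
    bmatNorm (X + Y) ≤ bmatNorm X + bmatNorm Y := by
  apply bmatNorm_le
  intro x hx
  rw [Matrix.add_mulVec]
  refine le_trans (bvecNorm_add _ _) (add_le_add ?_ ?_)
  · calc bvecNorm (X.mulVec x) ≤ bmatNorm X * bvecNorm x := bvecNorm_mulVec_le X x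
      _ ≤ bmatNorm X * 1 := mul_le_mul_of_nonneg_left hx (bmatNorm_nonneg X)
      _ = bmatNorm X := mul_one _
  · calc bvecNorm (Y.mulVec x) ≤ bmatNorm Y * bvecNorm x := bvecNorm_mulVec_le Y x
      _ ≤ bmatNorm Y * 1 := mul_le_mul_of_nonneg_left hx (bmatNorm_nonneg Y)
      _ = bmatNorm Y := mul_one _
end matrixhelpers

open Kronecker in
lemma bmatNorm_stoch {N M : ℕ} (A : Matrix (Fin N) (Fin N) ℝ)
    (hA_nonneg : ∀ l k, 0 ≤ A l k) (hA_stoch : ∀ k, ∑ l, A l k = 1) :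
    bmatNorm ((A.map (fun x => (x : ℂ)) ⊗ₖ (1 : Matrix (Fin M) (Fin M) ℂ))ᵀ) ≤ 1 := by
  apply bmatNorm_le
  intro x hx
  apply bvecNorm_le zero_le_one
  intro k
  have hblk : blk (((A.map (fun x => (x : ℂ)) ⊗ₖ (1 : Matrix (Fin M) (Fin M) ℂ))ᵀ).mulVec x) k
      = ∑ l : Fin N, ((A l k : ℝ) : ℂ) • blk x l := by
    ext j
    have h1 : blk (((A.map (fun x => (x : ℂ)) ⊗ₖ (1 : Matrix (Fin M) (Fin M) ℂ))ᵀ).mulVec x) k j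
        = ∑ p : Fin N × Fin M,
            ((A.map (fun x => (x : ℂ)) ⊗ₖ (1 : Matrix (Fin M) (Fin M) ℂ)) p (k, j)) * x p := rfl
    rw [h1]
    have h2 : (∑ l : Fin N, ((A l k : ℝ) : ℂ) • blk x l) j
        = ∑ l : Fin N, ((A l k : ℝ) : ℂ) * x (l, j) := by
      rw [WithLp.ofLp_sum, Finset.sum_apply]; rfl
    rw [h2, Fintype.sum_prod_type]
    refine Finset.sum_congr rfl fun l _ => ?_
    simp [Matrix.kroneckerMap_apply, Matrix.one_apply, Matrix.map_apply, ite_mul,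
      Finset.sum_ite_eq, mul_ite]
  rw [hblk]
  calc ‖∑ l : Fin N, ((A l k : ℝ) : ℂ) • blk x l‖
      ≤ ∑ l : Fin N, ‖((A l k : ℝ) : ℂ) • blk x l‖ := norm_sum_le _ _
    _ = ∑ l : Fin N, A l k * ‖blk x l‖ := by
        refine Finset.sum_congr rfl fun l _ => ?_
        rw [norm_smul, Complex.norm_real, Real.norm_of_nonneg (hA_nonneg l k)]
    _ ≤ ∑ l : Fin N, A l k * 1 := by
        refine Finset.sum_le_sum fun l _ => ?_
        exact mul_le_mul_of_nonneg_left (le_trans (blk_le_bvecNorm x l) hx) (hA_nonneg l k)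
    _ = 1 := by simp [hA_stoch k]

lemma norm_le_bmatNorm_of_mem_spectrum {o m : Type*} [Fintype o] [Fintype m]
    [DecidableEq o] [DecidableEq m]
    (B : Matrix (o × m) (o × m) ℂ) (lam : ℂ) (h : lam ∈ spectrum ℂ B) :
    ‖lam‖ ≤ bmatNorm B := by
  rw [spectrum.mem_iff] at h
  have hdet : ((algebraMap ℂ (Matrix (o × m) (o × m) ℂ) lam) - B).det = 0 := by
    by_contra hne
    exact h ((Matrix.isUnit_iff_isUnit_det _).mpr (isUnit_iff_ne_zero.mpr hne))
  obtain ⟨v, hv0, hv⟩ := Matrix.exists_mulVec_eq_zero_iff.mpr hdet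
  have halg : (algebraMap ℂ (Matrix (o × m) (o × m) ℂ) lam) = lam • (1 : Matrix _ _ ℂ) := by
    rw [Algebra.algebraMap_eq_smul_one]
  rw [halg, Matrix.sub_mulVec, Matrix.smul_mulVec, Matrix.one_mulVec, sub_eq_zero] at hv
  have h1 : bvecNorm (B.mulVec v) = ‖lam‖ * bvecNorm v := by
    rw [← hv, bvecNorm_smul]
  have h2 := bvecNorm_mulVec_le B v
  rw [h1] at h2
  have hvpos : 0 < bvecNorm v := by
    rcases eq_or_lt_of_le (bvecNorm_nonneg v) with h0 | hpos
    · exact absurd (eq_zero_of_bvecNorm h0.symm) hv0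
    · exact hpos
  exact le_of_mul_le_mul_right h2 hvpos

/-- Mean-stability bound for equalized diffusion LMS: with `A` left-stochastic with
nonnegative entries, `E` a channel-estimation-error matrix, `M` the (block-diagonal)
step-size matrix `diag{μ_k} ⊗ I_M` and `R` the block-diagonal covariance matrix, the
spectral radius of `B = ((A⊗I) + (E⊗I))ᵀ (I − M R)` satisfies
`ρ(B) ≤ (1 + ‖(E⊗I)ᵀ‖_{b,∞}) ‖I − M R‖_{b,∞}`. -/
theorem diffusion_mean_stability_bound
    {N M : ℕ} (A : Matrix (Fin N) (Fin N) ℝ)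
    (hA_nonneg : ∀ l k, 0 ≤ A l k)
    (hA_stoch : ∀ k, ∑ l, A l k = 1)
    (E : Matrix (Fin N) (Fin N) ℂ)
    (μ : Fin N → ℝ) (hμ : ∀ k, 0 < μ k)
    (Ru : Fin N → Matrix (Fin M) (Fin M) ℂ)
    (MM RR : Matrix (Fin N × Fin M) (Fin N × Fin M) ℂ)
    (hMM : MM = (Matrix.diagonal (fun k => ((μ k : ℝ) : ℂ))) ⊗ₖ (1 : Matrix (Fin M) (Fin M) ℂ))
    (hRR : RR = ∑ k : Fin N, (Matrix.single k k (1 : ℂ)) ⊗ₖ Ru k)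
    (B : Matrix (Fin N × Fin M) (Fin N × Fin M) ℂ)
    (hB : B = ((A.map (fun x => (x : ℂ)) ⊗ₖ (1 : Matrix (Fin M) (Fin M) ℂ))
        + E ⊗ₖ (1 : Matrix (Fin M) (Fin M) ℂ))ᵀ * (1 - MM * RR)) :
    spectralRadius ℂ B ≤ ENNReal.ofReal
      ((1 + bmatNorm (E ⊗ₖ (1 : Matrix (Fin M) (Fin M) ℂ))ᵀ) * bmatNorm (1 - MM * RR)) := by
  have key : bmatNorm B ≤ (1 + bmatNorm (E ⊗ₖ (1 : Matrix (Fin M) (Fin M) ℂ))ᵀ)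
      * bmatNorm (1 - MM * RR) := by
    rw [hB, Matrix.transpose_add]
    refine le_trans (bmatNorm_mul_le _ _) ?_
    refine mul_le_mul_of_nonneg_right ?_ (bmatNorm_nonneg _)
    refine le_trans (bmatNorm_add_le _ _) ?_
    exact add_le_add (bmatNorm_stoch A hA_nonneg hA_stoch) le_rfl
  show (⨆ k ∈ spectrum ℂ B, (‖k‖₊ : ENNReal)) ≤ _
  refine iSup₂_le fun lam hlam => ?_
  rw [← ENNReal.ofReal_coe_nnreal, coe_nnnorm]
  exact ENNReal.ofReal_le_ofReal
    (le_trans (norm_le_bmatNorm_of_mem_spectrum B lam hlam) key)
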